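/- Let A and B be finite connected simple graphs, let a₁, a₂ be vertices of A with d_A(a₁, a₂) = 2, and let b be any vertex of B. Then the number of edges of the Cartesian product A □ B that are closer to the vertex (a₁, b) than to the vertex (a₂, b) equals m^A_{a₁2a₂} · |V(B)| + n^A_{a₁2a₂} · |E(B)|, where m^A_{a₁2a₂} is the number of edges f of A with d(a₁, f) < d(a₂, f) and n^A_{a₁2a₂} is the number of vertices a of A with d(a, a₁) < d(a, a₂). -/

import Mathlib

open SimpleGraph

/-- Distance from a vertex to an edge (as an unordered pair): the minimum of
the distances to the two endpoints. -/
noncomputable def eDist {V : Type*} (G : SimpleGraph V) (g : V) (f : Sym2 V) : ℕ :=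
  Sym2.lift ⟨fun x y => min (G.dist g x) (G.dist g y), fun _ _ => min_comm _ _⟩ f

/-- The number of edges of `G` that are closer to `g` than to `h`. -/
noncomputable def mCloser {V : Type*} (G : SimpleGraph V) (g h : V) : ℕ :=
  {f ∈ G.edgeSet | eDist G g f < eDist G h f}.ncard

/-- The number of vertices of `G` that are closer to `g` than to `h`. -/
noncomputable def nCloser {V : Type*} (G : SimpleGraph V) (g h : V) : ℕ :=
  {a : V | G.dist a g < G.dist a h}.ncard

lemma eDist_mk {V : Type*} (G : SimpleGraph V) (g x y : V) :
    eDist G g s(x, y) = min (G.dist g x) (G.dist g y) := rfl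

lemma walk_dist_le {α β : Type*} {G : SimpleGraph α} {H : SimpleGraph β}
    (hG : G.Connected) (hH : H.Connected) {x y : α × β} (w : (G □ H).Walk x y) :
    G.dist x.1 y.1 + H.dist x.2 y.2 ≤ w.length := by
  induction w with
  | nil => simp [SimpleGraph.dist_self]
  | @cons u v z h p ih =>
    rcases h with ⟨ha, he⟩ | ⟨hb, he⟩
    · have h1 : G.dist u.1 z.1 ≤ G.dist u.1 v.1 + G.dist v.1 z.1 := hG.dist_triangle
      have h2 : G.dist u.1 v.1 = 1 := dist_eq_one_iff_adj.2 ha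
      show G.dist u.1 z.1 + H.dist u.2 z.2 ≤ p.length + 1
      rw [he]
      omega
    · have h1 : H.dist u.2 z.2 ≤ H.dist u.2 v.2 + H.dist v.2 z.2 := hH.dist_triangle
      have h2 : H.dist u.2 v.2 = 1 := dist_eq_one_iff_adj.2 hb
      show G.dist u.1 z.1 + H.dist u.2 z.2 ≤ p.length + 1
      rw [he]
      omega

lemma boxProd_dist {α β : Type*} {G : SimpleGraph α} {H : SimpleGraph β}
    (hG : G.Connected) (hH : H.Connected) (x y : α × β) :
    (G □ H).dist x y = G.dist x.1 y.1 + H.dist x.2 y.2 := by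
  refine le_antisymm ?_ ?_
  · obtain ⟨w₁, hw₁⟩ := hG.exists_walk_length_eq_dist x.1 y.1
    obtain ⟨w₂, hw₂⟩ := hH.exists_walk_length_eq_dist x.2 y.2
    have := SimpleGraph.dist_le ((w₁.boxProdLeft H x.2).append (w₂.boxProdRight G y.1))
    have l1 : (w₁.boxProdLeft H x.2).length = w₁.length := Walk.length_map _ _
    have l2 : (w₂.boxProdRight G y.1).length = w₂.length := Walk.length_map _ _
    rw [Walk.length_append, l1, l2, hw₁, hw₂] at this
    exact this
  · obtain ⟨w, hw⟩ := (hG.boxProd hH).exists_walk_length_eq_dist x y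
    exact hw ▸ walk_dist_le hG hH w

lemma ncard_sprod {γ δ : Type*} (s : Set γ) (t : Set δ) :
    (s ×ˢ t).ncard = s.ncard * t.ncard := by
  rw [← Nat.card_coe_set_eq, ← Nat.card_coe_set_eq, ← Nat.card_coe_set_eq,
    ← Nat.card_prod]
  exact Nat.card_congr (Equiv.Set.prod s t)
theorem boxProd_mCloser_left {α β : Type*} [Fintype α] [Fintype β]
    (A : SimpleGraph α) (B : SimpleGraph β)
    (hA : A.Connected) (hB : B.Connected)
    (a₁ a₂ : α) (h : A.dist a₁ a₂ = 2) (b : β) :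
    mCloser (A.boxProd B) (a₁, b) (a₂, b) =
      mCloser A a₁ a₂ * Fintype.card β + nCloser A a₁ a₂ * B.edgeSet.ncard := by
  classical
  have hdist : ∀ x y : α × β, (A □ B).dist x y = A.dist x.1 y.1 + B.dist x.2 y.2 :=
    boxProd_dist hA hB
  set SA : Set (Sym2 α) := {f ∈ A.edgeSet | eDist A a₁ f < eDist A a₂ f} with hSA
  set NA : Set α := {a : α | A.dist a a₁ < A.dist a a₂} with hNA
  set φA : Sym2 α × β → Sym2 (α × β) := fun p => Sym2.map (fun a => (a, p.2)) p.1 with hφA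
  set φB : α × Sym2 β → Sym2 (α × β) := fun p => Sym2.map (fun c => (p.1, c)) p.2 with hφB
  have hAinj : Function.Injective φA := by
    rintro ⟨f, c⟩ ⟨g, d⟩ hfg
    induction f, g using Sym2.inductionOn₂ with
    | hf p q r t =>
      simp only [hφA, Sym2.map_pair_eq, Sym2.eq_iff, Prod.mk.injEq] at hfg
      obtain ⟨⟨h1, h2⟩, h3, h4⟩ | ⟨⟨h1, h2⟩, h3, h4⟩ := hfg <;>
        simp [Sym2.eq_iff, h1, h2, h3, h4]
  have hBinj : Function.Injective φB := by
    rintro ⟨c, f⟩ ⟨d, g⟩ hfg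
    induction f, g using Sym2.inductionOn₂ with
    | hf p q r t =>
      simp only [hφB, Sym2.map_pair_eq, Sym2.eq_iff, Prod.mk.injEq] at hfg
      obtain ⟨⟨h1, h2⟩, h3, h4⟩ | ⟨⟨h1, h2⟩, h3, h4⟩ := hfg <;>
        simp [Sym2.eq_iff, h1, h2, h3, h4]
  have hkey : {f ∈ (A □ B).edgeSet | eDist (A □ B) (a₁, b) f < eDist (A □ B) (a₂, b) f}
      = φA '' (SA ×ˢ Set.univ) ∪ φB '' (NA ×ˢ B.edgeSet) := by
    ext f
    induction f using Sym2.ind with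
    | _ x y =>
      obtain ⟨x1, x2⟩ := x
      obtain ⟨y1, y2⟩ := y
      constructor
      · rintro ⟨hadj, hlt⟩
        rw [SimpleGraph.mem_edgeSet] at hadj
        rw [eDist_mk, eDist_mk, hdist, hdist, hdist, hdist] at hlt
        rcases hadj with ⟨ha, he⟩ | ⟨hb', he⟩
        · simp only at he ha
          subst he
          left
          refine ⟨(s(x1, y1), x2), ⟨⟨(SimpleGraph.mem_edgeSet _).2 ha, ?_⟩, Set.mem_univ _⟩, by
            simp [hφA, Sym2.map_pair_eq]⟩
          rw [eDist_mk, eDist_mk]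
          simp only at hlt
          omega
        · simp only at he hb'
          subst he
          right
          refine ⟨(x1, s(x2, y2)), ⟨?_, (SimpleGraph.mem_edgeSet _).2 hb'⟩, by
            simp [hφB, Sym2.map_pair_eq]⟩
          simp only [hNA, Set.mem_setOf_eq]
          rw [SimpleGraph.dist_comm (G := A) (u := x1) (v := a₁), SimpleGraph.dist_comm (G := A) (u := x1) (v := a₂)]
          simp only at hlt
          omega
      · rintro (⟨⟨g, c⟩, ⟨hg, -⟩, heq⟩ | ⟨⟨c, g⟩, ⟨hc, hg⟩, heq⟩)
        · induction g using Sym2.ind with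
          | _ p q =>
            simp only [hφA, Sym2.map_pair_eq, Sym2.eq_iff, Prod.mk.injEq] at heq
            obtain ⟨hgadj, hglt⟩ := hg
            rw [SimpleGraph.mem_edgeSet] at hgadj
            rw [eDist_mk, eDist_mk] at hglt
            rcases heq with ⟨⟨e1, e2⟩, e3, e4⟩ | ⟨⟨e1, e2⟩, e3, e4⟩ <;> subst e1 <;> subst e2
              <;> subst e3 <;> subst e4
            · refine ⟨(SimpleGraph.mem_edgeSet _).2 (Or.inl ⟨hgadj, rfl⟩), ?_⟩
              rw [eDist_mk, eDist_mk, hdist, hdist, hdist, hdist]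
              simp only
              omega
            · refine ⟨(SimpleGraph.mem_edgeSet _).2 (Or.inl ⟨hgadj.symm, rfl⟩), ?_⟩
              rw [eDist_mk, eDist_mk, hdist, hdist, hdist, hdist]
              simp only
              omega
        · induction g using Sym2.ind with
          | _ p q =>
            simp only [hφB, Sym2.map_pair_eq, Sym2.eq_iff, Prod.mk.injEq] at heq
            rw [SimpleGraph.mem_edgeSet] at hg
            simp only [hNA, Set.mem_setOf_eq] at hc
            rw [SimpleGraph.dist_comm (G := A) (u := c) (v := a₁), SimpleGraph.dist_comm (G := A) (u := c) (v := a₂)] at hc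
            rcases heq with ⟨⟨e1, e2⟩, e3, e4⟩ | ⟨⟨e1, e2⟩, e3, e4⟩ <;> subst e1 <;> subst e2
              <;> subst e3 <;> subst e4
            · refine ⟨(SimpleGraph.mem_edgeSet _).2 (Or.inr ⟨hg, rfl⟩), ?_⟩
              rw [eDist_mk, eDist_mk, hdist, hdist, hdist, hdist]
              simp only
              omega
            · refine ⟨(SimpleGraph.mem_edgeSet _).2 (Or.inr ⟨hg.symm, rfl⟩), ?_⟩
              rw [eDist_mk, eDist_mk, hdist, hdist, hdist, hdist]
              simp only
              omega
  have hdisj : Disjoint (φA '' (SA ×ˢ Set.univ)) (φB '' (NA ×ˢ B.edgeSet)) := by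
    rw [Set.disjoint_left]
    rintro f ⟨⟨g, c⟩, ⟨hg, -⟩, rfl⟩ ⟨⟨d, g'⟩, ⟨-, hg'⟩, heq⟩
    induction g using Sym2.ind with
    | _ p q =>
      induction g' using Sym2.ind with
      | _ r t =>
        have hpq : p ≠ q := ((SimpleGraph.mem_edgeSet _).1 hg.1).ne
        have hrt : r ≠ t := ((SimpleGraph.mem_edgeSet _).1 hg').ne
        simp only [hφA, hφB, Sym2.map_pair_eq, Sym2.eq_iff, Prod.mk.injEq] at heq
        rcases heq with ⟨⟨e1, -⟩, e3, -⟩ | ⟨⟨e1, -⟩, e3, -⟩ <;> simp_all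
  rw [mCloser, hkey, Set.ncard_union_eq hdisj (Set.toFinite _) (Set.toFinite _),
    Set.ncard_image_of_injOn (hAinj.injOn), Set.ncard_image_of_injOn (hBinj.injOn),
    ncard_sprod, ncard_sprod, Set.ncard_univ, Nat.card_eq_fintype_card]
  rfl
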